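/- Let Z = (Z₀,Z₁,Z₂,Z₃) ∈ ℂ⁴ satisfy −Z₀² + Z₁² + Z₂² + Z₃² = 0 and Z₁ − iZ₂ ≠ 0. Then, setting μ = (Z₁ − iZ₂)/2, a = (Z₀ + Z₃)/(Z₁ − iZ₂) and b = (Z₀ − Z₃)/(Z₁ − iZ₂), one has Z = μ·W(a,b). -/

import Mathlib

/-- The Weierstrass vector `W(a,b) = (a+b, 1+ab, i(1−ab), a−b) ∈ ℂ⁴`. -/
noncomputable def W (a b : ℂ) : Fin 4 → ℂ :=
  ![a + b, 1 + a * b, Complex.I * (1 - a * b), a - b]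

theorem stmt3 (Z : Fin 4 → ℂ)
    (hnull : -(Z 0) ^ 2 + (Z 1) ^ 2 + (Z 2) ^ 2 + (Z 3) ^ 2 = 0)
    (hne : Z 1 - Complex.I * Z 2 ≠ 0) :
    Z = ((Z 1 - Complex.I * Z 2) / 2) •
        W ((Z 0 + Z 3) / (Z 1 - Complex.I * Z 2)) ((Z 0 - Z 3) / (Z 1 - Complex.I * Z 2)) := by
  have hI : Complex.I ^ 2 = -1 := Complex.I_sq
  funext i
  fin_cases i <;> simp [W] <;> field_simp
  · linear_combination (0:ℂ) * hnull
  · linear_combination hnull - (Z 2)^2 * hI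
  · have h3 : -(Z 2 * Z 1 * Complex.I * 2) + Z 2 ^ 2 * Complex.I ^ 2 + Z 1 ^ 2 ≠ 0 := by
      have := pow_ne_zero 2 hne; convert this using 1; ring
    have hE := mul_inv_cancel₀ h3
    set E := (-(Z 2 * Z 1 * Complex.I * 2) + Z 2 ^ 2 * Complex.I ^ 2 + Z 1 ^ 2)⁻¹
    linear_combination (Complex.I * (Z 1 + Complex.I * Z 2)) * hE +
      (E * Complex.I * (Z 1 - Complex.I * Z 2) * (Z 2)^2 + 2 * Z 2) * hI -
      (E * Complex.I * (Z 1 - Complex.I * Z 2)) * hnull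
  · linear_combination (0:ℂ) * hnull
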